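/- Let a > 0, let i ≥ 2 be an integer, and let h : ℝ → ℝ be continuous and bounded. Define F_j(t) = ∫_{τ ∈ (-∞, t]} h(τ) · g_a^j(t - τ) dτ for each integer j ≥ 1. Then for every t ∈ ℝ, F_i is differentiable at t with F_i'(t) = a·(F_{i-1}(t) - F_i(t)). -/

import Mathlib

open Real MeasureTheory Set Filter Topology

/-- Erlang density with shape parameter `i` and rate parameter `a`. -/
noncomputable def erlang (a : ℝ) (i : ℕ) (t : ℝ) : ℝ :=
  a ^ i * t ^ (i - 1) * Real.exp (-a * t) / (Nat.factorial (i - 1))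


lemma expInt {b : ℝ} (hb : 0 < b) (c : ℝ) :
    IntegrableOn (fun x : ℝ => Real.exp (b * x)) (Set.Iic c) := by
  have h2 : IntegrableOn (fun x : ℝ => Real.exp (-b * x)) (Ici (-c)) :=
    Iff.mpr integrableOn_Ici_iff_integrableOn_Ioi (exp_neg_integrableOn_Ioi _ hb)
  have key := ((Measure.measurePreserving_neg (volume : Measure ℝ)).integrableOn_comp_preimage
      (Homeomorph.neg ℝ).measurableEmbedding (s := Ici (-c))).mpr h2
  have hs : (Neg.neg : ℝ → ℝ) ⁻¹' Ici (-c) = Iic c := by ext x; simp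
  rw [hs] at key
  refine key.congr_fun (fun x hx => ?_) measurableSet_Iic
  simp [Function.comp, neg_mul, mul_neg]

lemma tendsto_pow_exp_atBot {b : ℝ} (hb : 0 < b) (m : ℕ) :
    Tendsto (fun τ : ℝ => τ ^ m * Real.exp (b * τ)) atBot (𝓝 0) := by
  have T1 : Tendsto (fun s : ℝ => (b * s) ^ m * Real.exp (-(b * s))) atTop (𝓝 0) :=
    (tendsto_pow_mul_exp_neg_atTop_nhds_zero m).comp (tendsto_id.const_mul_atTop hb)
  have T2 : Tendsto (fun s : ℝ => ((-1 : ℝ)) ^ m * (b ^ m)⁻¹ * ((b * s) ^ m * Real.exp (-(b * s))))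
      atTop (𝓝 0) := by simpa using T1.const_mul (((-1 : ℝ)) ^ m * (b ^ m)⁻¹)
  have T3 := T2.comp tendsto_neg_atBot_atTop
  refine T3.congr fun τ => ?_
  have hbm : (b : ℝ) ^ m ≠ 0 := by positivity
  field_simp [Function.comp, mul_pow]
  show (-1) ^ m * (b * -τ) ^ m * Real.exp (-(b * -τ)) / b ^ m = _
  have h11 : ((-1 : ℝ)) ^ m * (-1) ^ m = 1 := by rw [← mul_pow]; norm_num
  rw [mul_neg, neg_neg, neg_pow (b * τ), mul_pow]
  rw [← mul_assoc, h11, one_mul]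
  field_simp

lemma kernInt {a M : ℝ} (ha : 0 < a) {h : ℝ → ℝ} (hcont : Continuous h)
    (hM : ∀ t : ℝ, |h t| ≤ M) (m : ℕ) (t : ℝ) :
    IntegrableOn (fun τ => h τ * (τ ^ m * Real.exp (a * τ))) (Set.Iic t) := by
  have hfc : Continuous fun τ : ℝ => h τ * (τ ^ m * Real.exp (a * τ)) := by
    exact hcont.mul ((continuous_pow m).mul ((continuous_const.mul continuous_id).rexp))
  apply LocallyIntegrableOn.integrableOn_of_isBigO_atBot
    (g := fun τ : ℝ => Real.exp (a / 2 * τ))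
  · exact hfc.locallyIntegrable.locallyIntegrableOn _
  · rw [Asymptotics.isBigO_iff]
    refine ⟨M, ?_⟩
    have hu : Tendsto (fun τ : ℝ => |τ ^ m * Real.exp (a / 2 * τ)|) atBot (𝓝 0) := by
      simpa using (tendsto_pow_exp_atBot (by linarith : (0:ℝ) < a / 2) m).abs
    filter_upwards [hu.eventually (gt_mem_nhds one_pos)] with τ hτ
    have h2 : |τ ^ m| * Real.exp (a / 2 * τ) ≤ 1 := by
      rw [abs_mul, abs_of_pos (Real.exp_pos _)] at hτ; exact hτ.le
    have h1 : |h τ| ≤ M := hM τ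
    have e1 : Real.exp (a * τ) = Real.exp (a / 2 * τ) * Real.exp (a / 2 * τ) := by
      rw [← Real.exp_add]; ring_nf
    rw [Real.norm_eq_abs, Real.norm_eq_abs, abs_mul, abs_mul,
      abs_of_pos (Real.exp_pos _), abs_of_pos (Real.exp_pos _), e1]
    calc |h τ| * (|τ ^ m| * (Real.exp (a / 2 * τ) * Real.exp (a / 2 * τ)))
        = |h τ| * ((|τ ^ m| * Real.exp (a / 2 * τ)) * Real.exp (a / 2 * τ)) := by ring
      _ ≤ M * (1 * Real.exp (a / 2 * τ)) := by
          have hM0 := (abs_nonneg (h τ)).trans h1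
          gcongr
      _ = M * Real.exp (a / 2 * τ) := by ring
  · exact ⟨Set.Iic 0, Iic_mem_atBot 0, expInt (by linarith) 0⟩

noncomputable def Gfun (a : ℝ) (h : ℝ → ℝ) (m : ℕ) (x : ℝ) : ℝ :=
  ∫ τ in Set.Iic x, h τ * (τ ^ m * Real.exp (a * τ))

lemma G_deriv {a M : ℝ} (ha : 0 < a) {h : ℝ → ℝ} (hcont : Continuous h)
    (hM : ∀ t : ℝ, |h t| ≤ M) (m : ℕ) (t : ℝ) :
    HasDerivAt (Gfun a h m) (h t * (t ^ m * Real.exp (a * t))) t := by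
  set f : ℝ → ℝ := fun τ => h τ * (τ ^ m * Real.exp (a * τ)) with hf
  have hfc : Continuous f :=
    hcont.mul ((continuous_pow m).mul ((continuous_const.mul continuous_id).rexp))
  have key : ∀ x : ℝ, Gfun a h m x = Gfun a h m 0 + ∫ s in (0:ℝ)..x, f s := by
    intro x
    have := intervalIntegral.integral_Iic_sub_Iic (kernInt ha hcont hM m 0) (kernInt ha hcont hM m x)
    rw [Gfun, Gfun]
    linarith [this]
  have hd : HasDerivAt (fun x : ℝ => Gfun a h m 0 + ∫ s in (0:ℝ)..x, f s) (f t) t :=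
    (intervalIntegral.integral_hasDerivAt_right (hfc.intervalIntegrable 0 t)
      (hfc.stronglyMeasurableAtFilter _ _) hfc.continuousAt).const_add _
  exact (funext key ▸ hd : HasDerivAt (Gfun a h m) (f t) t)

noncomputable def ufun (a : ℝ) (h : ℝ → ℝ) (m : ℕ) (x : ℝ) : ℝ :=
  ∫ τ in Set.Iic x, h τ * ((x - τ) ^ m * Real.exp (a * τ))

lemma u_expand {a M : ℝ} (ha : 0 < a) {h : ℝ → ℝ} (hcont : Continuous h)
    (hM : ∀ t : ℝ, |h t| ≤ M) (m : ℕ) (x : ℝ) :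
    ufun a h m x = ∑ k ∈ Finset.range (m + 1),
      ((m.choose k : ℝ) * (-1) ^ (m - k)) * (x ^ k * Gfun a h (m - k) x) := by
  have hpt : ∀ τ : ℝ, h τ * ((x - τ) ^ m * Real.exp (a * τ)) =
      ∑ k ∈ Finset.range (m + 1),
        ((m.choose k : ℝ) * (-1) ^ (m - k)) * (x ^ k * (h τ * (τ ^ (m - k) * Real.exp (a * τ)))) := by
    intro τ
    rw [sub_eq_add_neg, add_pow, Finset.sum_mul, Finset.mul_sum]
    refine Finset.sum_congr rfl fun k hk => ?_
    rw [neg_pow]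
    ring
  rw [ufun]
  simp_rw [hpt]
  rw [MeasureTheory.integral_finset_sum]
  · refine Finset.sum_congr rfl fun k hk => ?_
    rw [Gfun, ← MeasureTheory.integral_const_mul, ← MeasureTheory.integral_const_mul]
  · intro k hk
    exact ((kernInt ha hcont hM (m - k) x).const_mul _).const_mul _

lemma u_deriv {a M : ℝ} (ha : 0 < a) {h : ℝ → ℝ} (hcont : Continuous h)
    (hM : ∀ t : ℝ, |h t| ≤ M) (n : ℕ) (t : ℝ) :
    HasDerivAt (ufun a h (n + 1)) ((n + 1 : ℝ) * ufun a h n t) t := by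
  have hrw : ufun a h (n + 1) = fun x => ∑ k ∈ Finset.range (n + 2),
      (((n+1).choose k : ℝ) * (-1) ^ (n + 1 - k)) * (x ^ k * Gfun a h (n + 1 - k) x) :=
    funext fun x => u_expand ha hcont hM (n + 1) x
  rw [hrw]
  have hterm : ∀ k ∈ Finset.range (n + 2), HasDerivAt
      (fun x : ℝ => (((n+1).choose k : ℝ) * (-1) ^ (n + 1 - k)) * (x ^ k * Gfun a h (n + 1 - k) x))
      ((((n+1).choose k : ℝ) * (-1) ^ (n + 1 - k)) *
        ((k : ℝ) * t ^ (k - 1) * Gfun a h (n + 1 - k) t +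
          t ^ k * (h t * (t ^ (n + 1 - k) * Real.exp (a * t))))) t := by
    intro k hk
    exact ((hasDerivAt_pow k t).mul (G_deriv ha hcont hM (n + 1 - k) t)).const_mul _
  have hsum := HasDerivAt.fun_sum hterm
  refine hsum.congr_deriv ?_
  symm
  simp_rw [mul_add]
  rw [Finset.sum_add_distrib]
  have hS2 : ∑ i ∈ Finset.range (n + 2), ((n+1).choose i : ℝ) * (-1) ^ (n + 1 - i) *
      (t ^ i * (h t * (t ^ (n + 1 - i) * Real.exp (a * t)))) = 0 := by
    have hz : ∑ i ∈ Finset.range (n + 1 + 1), t ^ i * (-t) ^ (n + 1 - i) * ((n+1).choose i : ℝ)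
        = 0 := by rw [← add_pow]; simp
    calc ∑ i ∈ Finset.range (n + 2), ((n+1).choose i : ℝ) * (-1) ^ (n + 1 - i) *
          (t ^ i * (h t * (t ^ (n + 1 - i) * Real.exp (a * t))))
        = ∑ i ∈ Finset.range (n + 2),
            (t ^ i * (-t) ^ (n + 1 - i) * ((n+1).choose i : ℝ)) * (h t * Real.exp (a * t)) :=
          Finset.sum_congr rfl fun i _ => by rw [neg_pow]; ring
      _ = 0 := by rw [← Finset.sum_mul, hz, zero_mul]
  rw [hS2, add_zero, u_expand ha hcont hM n t, Finset.mul_sum]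
  conv_rhs => rw [Finset.sum_range_succ']
  have hf0 : ((n+1).choose 0 : ℝ) * (-1) ^ (n + 1 - 0) *
      ((0 : ℕ) * t ^ (0 - 1) * Gfun a h (n + 1 - 0) t) = 0 := by simp
  rw [hf0, add_zero]
  refine Finset.sum_congr rfl fun i hi => ?_
  have hc : ((n+1 : ℕ) : ℝ) * (n.choose i : ℝ) = ((n+1).choose (i+1) : ℝ) * ((i+1 : ℕ) : ℝ) := by
    exact_mod_cast congrArg (Nat.cast : ℕ → ℝ) (Nat.add_one_mul_choose_eq n i)
  have h1 : n + 1 - (i + 1) = n - i := Nat.succ_sub_succ n i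
  have h2 : i + 1 - 1 = i := Nat.succ_sub_one i
  rw [h1, h2]
  push_cast at hc ⊢
  linear_combination ((-1:ℝ)^(n-i) * t^i * Gfun a h (n-i) t) * hc

theorem linear_chain_step (a : ℝ) (ha : 0 < a) (i : ℕ) (hi : 2 ≤ i) (h : ℝ → ℝ)
    (hcont : Continuous h) (hbdd : ∃ M : ℝ, ∀ t : ℝ, |h t| ≤ M)
    (F : ℕ → ℝ → ℝ)
    (hF : ∀ j : ℕ, 1 ≤ j → ∀ t : ℝ, F j t = ∫ τ in Set.Iic t, h τ * erlang a j (t - τ)) :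
    ∀ t : ℝ, HasDerivAt (F i) (a * (F (i - 1) t - F i t)) t := by
  obtain ⟨M, hM⟩ := hbdd
  obtain ⟨n, rfl⟩ : ∃ n, i = n + 2 := ⟨i - 2, by omega⟩
  intro t
  have hidx : n + 2 - 1 = n + 1 := rfl
  rw [hidx]
  have hexp : ∀ x τ : ℝ, Real.exp (-a * (x - τ)) = Real.exp (-a * x) * Real.exp (a * τ) := by
    intro x τ; rw [← Real.exp_add]; ring_nf
  have hFeq : ∀ x : ℝ, F (n + 2) x =
      a ^ (n + 2) / (Nat.factorial (n + 1)) * (Real.exp (-a * x) * ufun a h (n + 1) x) := by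
    intro x
    have hpt : ∀ τ : ℝ, h τ * erlang a (n + 2) (x - τ) =
        a ^ (n + 2) / (Nat.factorial (n + 1)) *
          (Real.exp (-a * x) * (h τ * ((x - τ) ^ (n + 1) * Real.exp (a * τ)))) := by
      intro τ
      rw [erlang, show n + 2 - 1 = n + 1 from rfl, hexp x τ]
      ring
    rw [hF (n + 2) (by omega) x]
    simp_rw [hpt]
    rw [MeasureTheory.integral_const_mul, MeasureTheory.integral_const_mul, ufun]
  have hFeq' : ∀ x : ℝ, F (n + 1) x =
      a ^ (n + 1) / (Nat.factorial n) * (Real.exp (-a * x) * ufun a h n x) := by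
    intro x
    have hpt : ∀ τ : ℝ, h τ * erlang a (n + 1) (x - τ) =
        a ^ (n + 1) / (Nat.factorial n) *
          (Real.exp (-a * x) * (h τ * ((x - τ) ^ n * Real.exp (a * τ)))) := by
      intro τ
      rw [erlang, show n + 1 - 1 = n from rfl, hexp x τ]
      ring
    rw [hF (n + 1) (by omega) x]
    simp_rw [hpt]
    rw [MeasureTheory.integral_const_mul, MeasureTheory.integral_const_mul, ufun]
  have hde : HasDerivAt (fun x : ℝ => Real.exp (-a * x)) (Real.exp (-a * t) * (-a * 1)) t :=
    ((hasDerivAt_id t).const_mul (-a)).exp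
  have hu := u_deriv ha hcont hM n t
  have hD := (hde.mul hu).const_mul (a ^ (n + 2) / (Nat.factorial (n + 1) : ℝ))
  rw [funext hFeq]
  refine hD.congr_deriv ?_
  symm
  simp only [hFeq']
  have hfac : ((Nat.factorial (n + 1) : ℝ)) = (n + 1) * (Nat.factorial n : ℝ) := by
    exact_mod_cast Nat.factorial_succ n
  have hn0 : (Nat.factorial n : ℝ) ≠ 0 := (Nat.cast_pos.mpr (Nat.factorial_pos n)).ne'
  rw [hfac]
  field_simp
  ring
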